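/- Let p(x) be a real polynomial of degree at most d with |p(x)| ≤ ε for all x in [-Δ, Δ], where 0 < Δ < 1 and ε > 0. Then |p(1)| ≤ ε·|T_d(1 + (1-Δ)/Δ)|, where T_d is the Chebyshev polynomial of the first kind of degree d. -/

import Mathlib

open Polynomial

lemma natDegree_T_le' (n : ℕ) : (Polynomial.Chebyshev.T ℝ n).natDegree ≤ n := by
  induction n using Nat.strong_induction_on with
  | _ n ih =>
    match n with
    | 0 => simp [Polynomial.Chebyshev.T_zero]
    | 1 => simp [Polynomial.Chebyshev.T_one, natDegree_X_le]
    | (m+2) =>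
      have h : Polynomial.Chebyshev.T ℝ ((m:ℤ)+2)
          = 2 * X * Polynomial.Chebyshev.T ℝ ((m:ℤ)+1) - Polynomial.Chebyshev.T ℝ m :=
        Polynomial.Chebyshev.T_add_two ℝ m
      have e1 : ((m+2 : ℕ) : ℤ) = (m:ℤ)+2 := by push_cast; ring
      have e2 : ((m+1 : ℕ) : ℤ) = (m:ℤ)+1 := by push_cast; ring
      rw [e1, h]
      refine (natDegree_sub_le _ _).trans ?_
      have h1 : (2 * X * Polynomial.Chebyshev.T ℝ ((m:ℤ)+1)).natDegree ≤ m + 2 := by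
        refine (natDegree_mul_le).trans ?_
        have := ih (m+1) (by omega)
        rw [e2] at this
        have h2 : (2 * X : ℝ[X]).natDegree ≤ 1 := by
          refine natDegree_mul_le.trans ?_
          simp [natDegree_X_le]
        omega
      have h3 := ih m (by omega)
      simp only [max_le_iff]
      exact ⟨h1, h3.trans (by omega)⟩

/-- Paturi's corollary: if a real polynomial of degree at most `d` satisfies
`|p(x)| ≤ ε` on `[-Δ, Δ]` with `0 < Δ < 1` and `ε > 0`, then
`|p(1)| ≤ ε·|T_d(1 + (1-Δ)/Δ)|` where `T_d` is the Chebyshev polynomial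
of the first kind of degree `d`. -/
theorem paturi_corollary (p : Polynomial ℝ) (d : ℕ) (ε Δ : ℝ)
    (hd : p.natDegree ≤ d) (hΔ0 : 0 < Δ) (hΔ1 : Δ < 1) (hε : 0 < ε)
    (hb : ∀ x ∈ Set.Icc (-Δ) Δ, |p.eval x| ≤ ε) :
    |p.eval 1| ≤ ε * |(Polynomial.Chebyshev.T ℝ d).eval (1 + (1 - Δ) / Δ)| := by
  have hΔinv : 1 + (1 - Δ) / Δ = Δ⁻¹ := by field_simp; ring
  rcases Nat.eq_zero_or_pos d with hd0 | hd1
  · subst hd0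
    have hp : p = C (p.coeff 0) := Polynomial.eq_C_of_natDegree_le_zero hd
    have h0 := hb 0 ⟨by linarith, by linarith⟩
    rw [hp] at h0 ⊢
    simpa [Polynomial.Chebyshev.T_zero] using h0
  have hdpos : (0:ℝ) < d := by exact_mod_cast hd1
  set θ : Fin (d+1) → ℝ := fun k => k * Real.pi / d with hθ
  set v : Fin (d+1) → ℝ := fun k => Δ * Real.cos (θ k) with hv
  have hθmem : ∀ k : Fin (d+1), θ k ∈ Set.Icc 0 Real.pi := by
    intro k
    constructor
    · positivity
    · rw [hθ]
      have hk : (k:ℝ) ≤ d := by exact_mod_cast Nat.lt_succ_iff.mp k.isLt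
      rw [div_le_iff₀ hdpos]
      have := Real.pi_pos
      nlinarith
  have hvlt : ∀ i j : Fin (d+1), i < j → v j < v i := by
    intro i j hij
    have hθij : θ i < θ j := by
      have hij' : (i:ℝ) < j := by exact_mod_cast hij
      have hpi := Real.pi_pos
      show (i:ℝ) * Real.pi / d < (j:ℝ) * Real.pi / d
      gcongr
    have := Real.strictAntiOn_cos (hθmem i) (hθmem j) hθij
    exact mul_lt_mul_of_pos_left this hΔ0
  have hinj : Set.InjOn v (Finset.univ : Finset (Fin (d+1))) := by
    intro a _ b _ hab
    by_contra hne
    rcases lt_or_gt_of_ne hne with h | h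
    · exact absurd hab (hvlt a b h).ne'
    · exact absurd hab (hvlt b a h).ne
  have hvmem : ∀ k, v k ∈ Set.Icc (-Δ) Δ := by
    intro k
    have h1 := Real.neg_one_le_cos (θ k)
    have h2 := Real.cos_le_one (θ k)
    simp only [hv]
    constructor <;> nlinarith
  have hv1 : ∀ k, v k < 1 := fun k => lt_of_le_of_lt (hvmem k).2 hΔ1
  have hcard : (Finset.univ : Finset (Fin (d+1))).card = d + 1 := by simp
  have hdeg : p.degree < ((Finset.univ : Finset (Fin (d+1))).card : WithBot ℕ) := by
    rw [hcard]
    calc p.degree ≤ (p.natDegree : WithBot ℕ) := Polynomial.degree_le_natDegree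
      _ ≤ (d : WithBot ℕ) := by exact_mod_cast hd
      _ < ((d+1 : ℕ) : WithBot ℕ) := by exact_mod_cast Nat.lt_succ_self d
  have hpinterp : p = Lagrange.interpolate Finset.univ v (fun i => p.eval (v i)) :=
    Lagrange.eq_interpolate hinj hdeg
  have hp1 : p.eval 1 = ∑ i, p.eval (v i) * (Lagrange.basis Finset.univ v i).eval 1 := by
    conv_lhs => rw [hpinterp]
    simp [Lagrange.interpolate_apply, eval_finset_sum]
  -- sign of Lagrange basis at 1
  have hL : ∀ i : Fin (d+1), |(Lagrange.basis Finset.univ v i).eval 1|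
      = (-1)^(i:ℕ) * (Lagrange.basis Finset.univ v i).eval 1 := by
    intro i
    have hbasis : (Lagrange.basis Finset.univ v i).eval 1
        = ∏ j ∈ Finset.univ.erase i, ((v i - v j)⁻¹ * (1 - v j)) := by
      simp [Lagrange.basis, Lagrange.basisDivisor, eval_prod]
    rw [hbasis, Finset.abs_prod]
    have key : ∀ j ∈ Finset.univ.erase i,
        |(v i - v j)⁻¹ * (1 - v j)| = (if j < i then (-1:ℝ) else 1) * ((v i - v j)⁻¹ * (1 - v j)) := by
      intro j hj
      have hji : j ≠ i := Finset.ne_of_mem_erase hj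
      have h1j : 0 < 1 - v j := by linarith [hv1 j]
      rcases lt_or_gt_of_ne hji with h | h
      · have hvij : v i - v j < 0 := sub_neg.mpr (hvlt j i h)
        have hneg : (v i - v j)⁻¹ * (1 - v j) < 0 :=
          mul_neg_of_neg_of_pos (inv_neg''.mpr hvij) h1j
        rw [if_pos h, abs_of_neg hneg]; ring
      · have hvij : 0 < v i - v j := sub_pos.mpr (hvlt i j h)
        have hpos : 0 < (v i - v j)⁻¹ * (1 - v j) := mul_pos (inv_pos.mpr hvij) h1j
        rw [if_neg (not_lt.mpr h.le), abs_of_pos hpos]; ring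
    rw [Finset.prod_congr rfl key, Finset.prod_mul_distrib]
    congr 1
    rw [Finset.prod_erase _ (by simp), Finset.prod_ite, Finset.prod_const, Finset.prod_const,
      one_pow, mul_one]
    congr 1
    have : Finset.filter (fun j => j < i) Finset.univ = Finset.Iio i := by ext j; simp
    rw [this, Fin.card_Iio]
  -- the Chebyshev comparison polynomial
  set q : ℝ[X] := (Polynomial.Chebyshev.T ℝ d).comp (C Δ⁻¹ * X) with hqdef
  have hqdeg : q.degree < ((Finset.univ : Finset (Fin (d+1))).card : WithBot ℕ) := by
    rw [hcard]
    have h1 : q.natDegree ≤ d := by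
      rw [hqdef]
      refine (Polynomial.natDegree_comp_le).trans ?_
      have h2 : (C Δ⁻¹ * X : ℝ[X]).natDegree ≤ 1 := by
        refine natDegree_mul_le.trans ?_
        simp [natDegree_X_le]
      calc (Polynomial.Chebyshev.T ℝ d).natDegree * (C Δ⁻¹ * X : ℝ[X]).natDegree
          ≤ d * 1 := Nat.mul_le_mul (natDegree_T_le' d) h2
        _ = d := by ring
    calc q.degree ≤ (q.natDegree : WithBot ℕ) := Polynomial.degree_le_natDegree
      _ ≤ (d : WithBot ℕ) := by exact_mod_cast h1
      _ < ((d+1 : ℕ) : WithBot ℕ) := by exact_mod_cast Nat.lt_succ_self d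
  have hqeval : ∀ i : Fin (d+1), q.eval (v i) = (-1)^(i:ℕ) := by
    intro i
    rw [hqdef]
    simp only [eval_comp, eval_mul, eval_C, eval_X]
    have h1 : Δ⁻¹ * v i = Real.cos (θ i) := by
      rw [hv]; field_simp
    rw [h1, Polynomial.Chebyshev.T_real_cos]
    have h2 : ((d:ℤ):ℝ) * θ i = (i:ℕ) * Real.pi := by
      rw [hθ]; push_cast; field_simp
    rw [h2]
    simpa using Real.cos_nat_mul_pi_sub 0 (i:ℕ)
  have hqinterp : q = Lagrange.interpolate Finset.univ v (fun i => (-1)^(i:ℕ)) :=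
    Lagrange.eq_interpolate_of_eval_eq _ hinj hqdeg (fun i _ => hqeval i)
  have hq1 : q.eval 1 = ∑ i : Fin (d+1), (-1:ℝ)^(i:ℕ) * (Lagrange.basis Finset.univ v i).eval 1 := by
    conv_lhs => rw [hqinterp]
    simp [Lagrange.interpolate_apply, eval_finset_sum]
  -- final chain
  have step1 : |p.eval 1| ≤ ε * q.eval 1 := by
    rw [hp1, hq1, Finset.mul_sum]
    refine (Finset.abs_sum_le_sum_abs _ _).trans ?_
    refine Finset.sum_le_sum fun i _ => ?_
    rw [abs_mul, hL i]
    have h1 : |p.eval (v i)| ≤ ε := hb (v i) (hvmem i)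
    have h2 : (0:ℝ) ≤ (-1)^(i:ℕ) * (Lagrange.basis Finset.univ v i).eval 1 := by
      rw [← hL i]; exact abs_nonneg _
    calc |p.eval (v i)| * ((-1)^(i:ℕ) * (Lagrange.basis Finset.univ v i).eval 1)
        ≤ ε * ((-1)^(i:ℕ) * (Lagrange.basis Finset.univ v i).eval 1) :=
          mul_le_mul_of_nonneg_right h1 h2
      _ = ε * ((-1)^(i:ℕ) * (Lagrange.basis Finset.univ v i).eval 1) := rfl
  have hqval : q.eval 1 = (Polynomial.Chebyshev.T ℝ d).eval (1 + (1 - Δ) / Δ) := by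
    rw [hqdef, hΔinv]
    simp [eval_comp]
  calc |p.eval 1| ≤ ε * q.eval 1 := step1
    _ = ε * (Polynomial.Chebyshev.T ℝ d).eval (1 + (1 - Δ) / Δ) := by rw [hqval]
    _ ≤ ε * |(Polynomial.Chebyshev.T ℝ d).eval (1 + (1 - Δ) / Δ)| :=
        mul_le_mul_of_nonneg_left (le_abs_self _) hε.le
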